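/- Let $Y$ be a Bernoulli random variable with probability of success $p$. Then for every integer $n \ge 1$ and every real number $x$, $B_n^{(L,Y)}(x) = B_n^L(px)$. -/

import Mathlib

open MeasureTheory ProbabilityTheory Finset

/-- The rising factorial `⟨x⟩_n = x (x+1) ⋯ (x+n-1)`, with `⟨x⟩_0 = 1`. -/
noncomputable def asc (x : ℝ) : ℕ → ℝ
  | 0 => 1
  | n + 1 => asc x n * (x + n)

/-- The probabilistic Lah numbers associated with the random variable `Y`, defined from
the iid copies `Ys` of `Y` via `L_Y(n,k) = (1/k!) ∑_{l=0}^k C(k,l) (-1)^{k-l} E[⟨S_l⟩_n]`,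
where `S_l = Y_1 + ⋯ + Y_l`. -/
noncomputable def probLah {Ω : Type*} [MeasurableSpace Ω] (μ : Measure Ω)
    (Ys : ℕ → Ω → ℝ) (n k : ℕ) : ℝ :=
  (k.factorial : ℝ)⁻¹ * ∑ l ∈ Finset.range (k + 1),
    (k.choose l : ℝ) * (-1) ^ (k - l) * ∫ ω, asc (∑ j ∈ Finset.range l, Ys j ω) n ∂μ

/-- The probabilistic Lah-Bell polynomials `B_n^{(L,Y)}(x) = ∑_{k=0}^n L_Y(n,k) x^k`. -/
noncomputable def probLahBell {Ω : Type*} [MeasurableSpace Ω] (μ : Measure Ω)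
    (Ys : ℕ → Ω → ℝ) (n : ℕ) (x : ℝ) : ℝ :=
  ∑ k ∈ Finset.range (n + 1), probLah μ Ys n k * x ^ k

/-- The unsigned Lah numbers: `L(n,k) = n!/k! · C(n-1,k-1)` for `1 ≤ k ≤ n`,
with `L(0,0) = 1` and `L(n,0) = 0` for `n ≥ 1`. -/
noncomputable def Lah (n k : ℕ) : ℝ :=
  if k = 0 then (if n = 0 then 1 else 0)
  else if k ≤ n then (n.factorial : ℝ) / (k.factorial : ℝ) * ((n - 1).choose (k - 1) : ℝ)
  else 0

/-- The Lah-Bell polynomial `B_n^L(x) = ∑_{k=0}^n L(n,k) x^k`. -/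
noncomputable def LahBell (n : ℕ) (x : ℝ) : ℝ :=
  ∑ k ∈ Finset.range (n + 1), Lah n k * x ^ k

noncomputable def fall (x : ℝ) : ℕ → ℝ
  | 0 => 1
  | n + 1 => fall x n * (x - n)

lemma core (m j : ℕ) : (m+2) * (m+1).choose (j+1) = (j+2) * m.choose j + (m+j+3) * m.choose (j+1) := by
  rcases le_or_gt j m with h | h
  · have h1 := Nat.choose_succ_right_eq m j
    rw [Nat.choose_succ_succ]
    have h2 : (m+2) * m.choose j = (j+2) * m.choose j + (m - j) * m.choose j := by
      rw [← Nat.add_mul]; congr 1; omega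
    nlinarith [h1, h2]
  · rw [Nat.choose_eq_zero_of_lt (by omega : m + 1 < j + 1), Nat.choose_eq_zero_of_lt h,
        Nat.choose_eq_zero_of_lt (by omega : m < j + 1)]
    ring

lemma lah_zero_right (n : ℕ) : Lah n 0 = if n = 0 then 1 else 0 := by simp [Lah]

lemma lah_succ_succ (n k : ℕ) :
    Lah (n+1) (k+1) = Lah n k + ((n:ℝ) + k + 1) * Lah n (k+1) := by
  rcases Nat.eq_zero_or_pos k with rfl | hk
  · have eL : Lah (n+1) 1 = ((n+1).factorial : ℝ) := by
      simp [Lah]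
    have eR : Lah n 1 = if 1 ≤ n then (n.factorial : ℝ) else 0 := by
      rcases Nat.lt_or_ge n 1 with h | h
      · simp only [Lah, if_neg (Nat.one_ne_zero), if_neg (by omega : ¬ 1 ≤ n), if_neg (by omega : ¬ 1 ≤ n)]
      · simp only [Lah, if_neg (Nat.one_ne_zero), if_pos h]
        simp
    rw [eL, lah_zero_right, eR]
    rcases Nat.eq_zero_or_pos n with rfl | hn
    · norm_num
    · rw [if_neg (by omega), if_pos (by omega)]
      push_cast [Nat.factorial_succ]
      ring
  · rcases Nat.lt_or_ge n k with h | h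
    · have e1 : Lah (n+1) (k+1) = 0 := by
        simp only [Lah, if_neg (Nat.succ_ne_zero k)]
        rw [if_neg (by omega)]
      have e2 : Lah n k = 0 := by
        simp only [Lah, if_neg (by omega : k ≠ 0)]
        rw [if_neg (by omega)]
      have e3 : Lah n (k+1) = 0 := by
        simp only [Lah, if_neg (Nat.succ_ne_zero k)]
        rw [if_neg (by omega)]
      rw [e1, e2, e3]; ring
    · obtain ⟨m, rfl⟩ : ∃ m, n = m + 1 := ⟨n - 1, by omega⟩
      obtain ⟨j, rfl⟩ : ∃ j, k = j + 1 := ⟨k - 1, by omega⟩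
      have e1 : Lah (m+2) (j+2) = ((m+2).factorial : ℝ) / ((j+2).factorial : ℝ) * ((m+1).choose (j+1) : ℝ) := by
        simp only [Lah, if_neg (Nat.succ_ne_zero _), if_pos (by omega : j + 2 ≤ m + 2)]
        norm_num
      have e2 : Lah (m+1) (j+1) = ((m+1).factorial : ℝ) / ((j+1).factorial : ℝ) * (m.choose j : ℝ) := by
        simp only [Lah, if_neg (Nat.succ_ne_zero _), if_pos (by omega : j + 1 ≤ m + 1)]
        norm_num
      have e3 : Lah (m+1) (j+2) = ((m+1).factorial : ℝ) / ((j+2).factorial : ℝ) * (m.choose (j+1) : ℝ) := by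
        rcases Nat.lt_or_ge (m+1) (j+2) with h2 | h2
        · have hz : m.choose (j+1) = 0 := Nat.choose_eq_zero_of_lt (by omega)
          simp only [Lah, if_neg (Nat.succ_ne_zero _)]
          rw [if_neg (by omega : ¬ (j + 2 ≤ m + 1)), hz]
          simp
        · simp only [Lah, if_neg (Nat.succ_ne_zero _), if_pos h2]
          norm_num
      rw [e1, e2, e3]
      have hcR : ((m:ℝ)+2) * ((m+1).choose (j+1) : ℝ)
          = ((j:ℝ)+2) * (m.choose j : ℝ) + ((m:ℝ)+(j:ℝ)+3) * (m.choose (j+1) : ℝ) := by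
        exact_mod_cast core m j
      have hfacts : ((j+2).factorial : ℝ) = ((j:ℝ) + 2) * ((j+1).factorial : ℝ) := by
        push_cast [Nat.factorial_succ]; ring
      have hfactm : ((m+2).factorial : ℝ) = ((m:ℝ) + 2) * ((m+1).factorial : ℝ) := by
        push_cast [Nat.factorial_succ]; ring
      have hfj : ((j+1).factorial : ℝ) ≠ 0 := Nat.cast_ne_zero.2 (j+1).factorial_ne_zero
      have hj2 : ((j:ℝ)+2) ≠ 0 := by positivity
      rw [hfacts, hfactm]
      push_cast
      field_simp
      linear_combination hcR

lemma lah_gt {n k : ℕ} (h : n < k) : Lah n k = 0 := by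
  have hk : k ≠ 0 := by omega
  simp only [Lah, if_neg hk]
  rw [if_neg (by omega)]

lemma asc_eq_sum (x : ℝ) (n : ℕ) :
    asc x n = ∑ k ∈ range (n+1), Lah n k * fall x k := by
  induction n with
  | zero => simp [asc, fall, Lah]
  | succ n ih =>
    have hstep : asc x (n+1) = (∑ k ∈ range (n+1), Lah n k * fall x k) * (x + n) := by
      rw [asc, ih]
    rw [hstep]
    have hterm : ∀ k : ℕ, Lah n k * fall x k * (x + n)
        = Lah n k * fall x (k+1) + ((n:ℝ) + k) * (Lah n k * fall x k) := by
      intro k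
      have : fall x (k+1) = fall x k * (x - k) := rfl
      rw [this]; ring
    rw [Finset.sum_mul]
    rw [Finset.sum_congr rfl (fun k _ => hterm k), Finset.sum_add_distrib]
    have hR : ∑ k ∈ range (n+1+1), Lah (n+1) k * fall x k
        = ∑ k ∈ range (n+1), (Lah n k + ((n:ℝ) + k + 1) * Lah n (k+1)) * fall x (k+1)
          + Lah (n+1) 0 * fall x 0 := by
      rw [Finset.sum_range_succ']
      congr 1
      exact Finset.sum_congr rfl (fun k _ => by rw [lah_succ_succ])
    rw [hR, lah_zero_right, if_neg (Nat.succ_ne_zero n)]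
    have hsecond : ∑ k ∈ range (n+1), ((n:ℝ) + k) * (Lah n k * fall x k)
        = ∑ k ∈ range (n+1), ((n:ℝ) + k + 1) * Lah n (k+1) * fall x (k+1) := by
      rw [Finset.sum_range_succ' (fun k => ((n:ℝ) + k) * (Lah n k * fall x k)) n]
      rw [Finset.sum_range_succ (fun k => ((n:ℝ) + k + 1) * Lah n (k+1) * fall x (k+1)) n]
      have h0 : ((n:ℝ) + ((0:ℕ):ℝ)) * (Lah n 0 * fall x 0) = 0 := by
        rcases Nat.eq_zero_or_pos n with rfl | hn
        · norm_num
        · rw [lah_zero_right, if_neg (by omega)]; ring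
      have hn1 : ((n:ℝ) + n + 1) * Lah n (n+1) * fall x (n+1) = 0 := by
        rw [lah_gt (by omega)]; ring
      rw [h0, hn1, add_zero, add_zero]
      refine Finset.sum_congr rfl (fun k _ => ?_)
      push_cast; ring
    rw [hsecond, zero_mul, add_zero, ← Finset.sum_add_distrib]
    refine Finset.sum_congr rfl (fun k _ => ?_)
    ring

lemma fall_nat (c k : ℕ) : fall (c : ℝ) k = (c.descFactorial k : ℝ) := by
  induction k with
  | zero => simp [fall]
  | succ k ih =>
    rw [fall, ih]
    rcases Nat.lt_or_ge c k with h | h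
    · rw [Nat.descFactorial_eq_zero_iff_lt.2 h, Nat.descFactorial_eq_zero_iff_lt.2 (by omega)]
      simp
    · rw [Nat.descFactorial_succ]
      push_cast [Nat.cast_sub h]
      ring

lemma negpow (a m : ℕ) (h : m ≤ a) : ((-1:ℝ))^(a-m) = (-1)^a * (-1)^m := by
  have h2 : ((-1:ℝ))^m * (-1)^m = 1 := by
    rw [← pow_add]; exact Even.neg_one_pow ⟨m, rfl⟩
  calc ((-1:ℝ))^(a-m) = (-1)^(a-m) * ((-1)^m * (-1)^m) := by rw [h2, mul_one]
    _ = ((-1)^(a-m) * (-1)^m) * (-1)^m := by ring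
    _ = (-1)^a * (-1)^m := by rw [← pow_add]; congr 2; omega

lemma alt_sum (k j : ℕ) :
    ∑ l ∈ range (k+1), ((-1:ℝ))^(k-l) * (k.choose l) * (l.choose j) = if j = k then 1 else 0 := by
  rcases le_or_gt j k with hjk | hjk
  · have hIco : ∑ l ∈ Finset.Ico 0 j, ((-1:ℝ))^(k-l) * (k.choose l) * (l.choose j) = 0 := by
      apply Finset.sum_eq_zero
      intro l hl
      rw [Nat.choose_eq_zero_of_lt (Finset.mem_Ico.1 hl).2]
      simp
    rw [Finset.range_eq_Ico, ← Finset.sum_Ico_consecutive _ (Nat.zero_le j) (by omega : j ≤ k+1),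
      hIco, zero_add, Finset.sum_Ico_eq_sum_range]
    have hkj : k + 1 - j = (k - j) + 1 := by omega
    rw [hkj]
    have hterm : ∀ i ∈ range ((k-j)+1), ((-1:ℝ))^(k-(j+i)) * (k.choose (j+i)) * ((j+i).choose j)
        = ((k.choose j : ℝ) * (-1)^(k-j)) * ((-1)^i * ((k-j).choose i)) := by
      intro i hi
      have hik : i ≤ k - j := by
        have := Finset.mem_range.1 hi; omega
      have hchoose : k.choose (j+i) * (j+i).choose j = k.choose j * (k-j).choose i := by
        have := Nat.choose_mul (n := k) (show j ≤ j + i by omega)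
        simpa using this
      have hsign : ((-1:ℝ))^(k-(j+i)) = (-1)^(k-j) * (-1)^i := by
        have : k - (j+i) = (k-j) - i := by omega
        rw [this, negpow _ _ hik]
      rw [hsign]
      have hc : ((k.choose (j+i) : ℝ)) * ((j+i).choose j : ℝ) = (k.choose j : ℝ) * ((k-j).choose i : ℝ) := by
        exact_mod_cast congrArg (Nat.cast : ℕ → ℝ) hchoose
      linear_combination ((-1:ℝ))^(k-j) * (-1)^i * hc
    rw [Finset.sum_congr rfl hterm, ← Finset.mul_sum]
    have halt : ∑ i ∈ range ((k-j)+1), ((-1:ℝ))^i * ((k-j).choose i) = if k - j = 0 then 1 else 0 := by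
      have h := Int.alternating_sum_range_choose (n := k - j)
      exact_mod_cast h
    rw [halt]
    rcases eq_or_lt_of_le hjk with rfl | h
    · simp
    · rw [if_neg (by omega), if_neg (by omega)]
      ring
  · rw [if_neg (by omega : ¬ j = k)]
    apply Finset.sum_eq_zero
    intro l hl
    rw [Nat.choose_eq_zero_of_lt (show l < j by have := Finset.mem_range.1 hl; omega)]
    simp

lemma fall_sum_eq {ι : Type*} [DecidableEq ι] (s : Finset ι) (y : ι → ℝ)
    (hy : ∀ i ∈ s, y i = 0 ∨ y i = 1) (j : ℕ) :
    fall (∑ i ∈ s, y i) j = (j.factorial : ℝ) * ∑ T ∈ s.powersetCard j, ∏ i ∈ T, y i := by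
  classical
  set s1 := s.filter (fun i => y i = 1) with hs1
  have hsum : ∑ i ∈ s, y i = (s1.card : ℝ) := by
    rw [← Finset.sum_filter_add_sum_filter_not s (fun i => y i = 1)]
    have h1 : ∑ i ∈ s1, y i = (s1.card : ℝ) := by
      rw [Finset.sum_congr rfl (fun i hi => (Finset.mem_filter.1 hi).2), Finset.sum_const,
        nsmul_eq_mul, mul_one]
    have h2 : ∑ i ∈ s.filter (fun i => ¬ y i = 1), y i = 0 := by
      apply Finset.sum_eq_zero
      intro i hi
      rcases Finset.mem_filter.1 hi with ⟨his, hne⟩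
      rcases hy i his with h | h
      · exact h
      · exact absurd h hne
    rw [h2, add_zero, h1]
  have hprod : ∀ T ∈ s.powersetCard j, (∏ i ∈ T, y i) = if T ⊆ s1 then (1:ℝ) else 0 := by
    intro T hT
    rcases Finset.mem_powersetCard.1 hT with ⟨hTs, hcard⟩
    by_cases hT1 : T ⊆ s1
    · rw [if_pos hT1]
      exact Finset.prod_eq_one (fun i hi => (Finset.mem_filter.1 (hT1 hi)).2)
    · rw [if_neg hT1]
      obtain ⟨i, hiT, hi1⟩ := Finset.not_subset.1 hT1
      apply Finset.prod_eq_zero hiT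
      rcases hy i (hTs hiT) with h | h
      · exact h
      · exact absurd (Finset.mem_filter.2 ⟨hTs hiT, h⟩) hi1
  rw [hsum, fall_nat, Finset.sum_congr rfl hprod, Finset.sum_boole]
  have hfilter : (s.powersetCard j).filter (fun T => T ⊆ s1) = s1.powersetCard j := by
    ext T
    simp only [Finset.mem_filter, Finset.mem_powersetCard]
    constructor
    · rintro ⟨⟨hTs, hc⟩, hT1⟩
      exact ⟨hT1, hc⟩
    · rintro ⟨hT1, hc⟩
      exact ⟨⟨hT1.trans (Finset.filter_subset _ _), hc⟩, hT1⟩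
  rw [hfilter, Finset.card_powersetCard, Nat.descFactorial_eq_factorial_mul_choose]
  push_cast
  ring

theorem statement_15 {Ω : Type*} [MeasurableSpace Ω] (μ : Measure Ω) [IsProbabilityMeasure μ]
    (Y : Ω → ℝ) (Ys : ℕ → Ω → ℝ)
    (hY : Measurable Y) (hYs : ∀ j, Measurable (Ys j))
    (hid : ∀ j, IdentDistrib (Ys j) Y μ μ)
    (hindep : iIndepFun Ys μ)
    (p : ℝ) (hp0 : 0 ≤ p) (hp1 : p ≤ 1)
    (hber1 : μ {ω | Y ω = 1} = ENNReal.ofReal p)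
    (hber0 : μ {ω | Y ω = 0} = ENNReal.ofReal (1 - p))
    (n : ℕ) (hn : 1 ≤ n) (x : ℝ) :
    probLahBell μ Ys n x = LahBell n (p * x) := by
  classical
  have hmp : ∀ T : Finset ℕ, Measurable (fun ω => ∏ i ∈ T, Ys i ω) :=
    fun T => Finset.measurable_prod T (fun i _ => hYs i)
  have hA : MeasurableSet {ω | Y ω = 1} := hY (measurableSet_singleton 1)
  have hB : MeasurableSet {ω | Y ω = 0} := hY (measurableSet_singleton 0)
  -- Y is a.e. {0,1}-valued
  have hY01 : ∀ᵐ ω ∂μ, Y ω = 0 ∨ Y ω = 1 := by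
    have hdisj : Disjoint {ω | Y ω = 0} {ω | Y ω = 1} := by
      rw [Set.disjoint_left]
      intro ω h0 h1
      simp only [Set.mem_setOf_eq] at h0 h1
      rw [h0] at h1; norm_num at h1
    have hunion : μ ({ω | Y ω = 0} ∪ {ω | Y ω = 1}) = 1 := by
      rw [measure_union hdisj hA, hber0, hber1,
        ← ENNReal.ofReal_add (by linarith) hp0]
      norm_num
    rw [ae_iff]
    have hc : {ω | ¬ (Y ω = 0 ∨ Y ω = 1)} = ({ω | Y ω = 0} ∪ {ω | Y ω = 1})ᶜ := by
      ext ω; simp [Set.mem_union]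
    rw [hc, measure_compl (hB.union hA) (measure_ne_top μ _), hunion, measure_univ]
    simp
  -- each Ys j is a.e. {0,1}-valued
  have hYs01 : ∀ j, ∀ᵐ ω ∂μ, Ys j ω = 0 ∨ Ys j ω = 1 := by
    intro j
    have hs : MeasurableSet ({0,1} : Set ℝ) :=
      (measurableSet_singleton 0).union (measurableSet_singleton 1)
    have hmeq := (hid j).measure_mem_eq hs.compl
    rw [ae_iff]
    have h1 : {ω | ¬ (Ys j ω = 0 ∨ Ys j ω = 1)} = Ys j ⁻¹' ({0,1} : Set ℝ)ᶜ := by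
      ext ω; simp
    have h2 : {ω | ¬ (Y ω = 0 ∨ Y ω = 1)} = Y ⁻¹' ({0,1} : Set ℝ)ᶜ := by
      ext ω; simp
    rw [h1, hmeq, ← h2]
    exact ae_iff.1 hY01
  -- expectation of each Ys j is p
  have hYint : ∫ ω, Y ω ∂μ = p := by
    have hcong : Y =ᵐ[μ] Set.indicator {ω | Y ω = 1} (fun _ => (1:ℝ)) := by
      filter_upwards [hY01] with ω hω
      rcases hω with h | h
      · rw [h, Set.indicator_of_notMem]
        simp [Set.mem_setOf_eq, h]
      · rw [h, Set.indicator_of_mem]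
        simpa [Set.mem_setOf_eq] using h
    rw [integral_congr_ae hcong, integral_indicator_const (1:ℝ) hA, measureReal_def, hber1, smul_eq_mul, mul_one]
    exact ENNReal.toReal_ofReal hp0
  have hEy : ∀ j, ∫ ω, Ys j ω ∂μ = p := fun j => ((hid j).integral_eq).trans hYint
  -- integrability of finite products
  have hint : ∀ T : Finset ℕ, Integrable (fun ω => ∏ i ∈ T, Ys i ω) μ := by
    intro T
    have hall : ∀ᵐ ω ∂μ, ∀ i ∈ (T : Set ℕ), Ys i ω = 0 ∨ Ys i ω = 1 :=
      (Filter.eventually_all_finite T.finite_toSet).2 (fun i _ => hYs01 i)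
    have hbd : ∀ᵐ ω ∂μ, ‖∏ i ∈ T, Ys i ω‖ ≤ 1 := by
      filter_upwards [hall] with ω hω
      rw [Real.norm_eq_abs, Finset.abs_prod]
      apply Finset.prod_le_one
      · intro i _; exact abs_nonneg _
      · intro i hi
        rcases hω i (by simpa using hi) with h | h <;> simp [h]
    exact (integrable_const (1:ℝ)).mono' (hmp T).aestronglyMeasurable hbd
  -- expectation of products
  have hprodE : ∀ T : Finset ℕ, ∫ ω, ∏ i ∈ T, Ys i ω ∂μ = p ^ T.card := by
    intro T
    induction T using Finset.cons_induction with
    | empty => simp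
    | cons a T ha ih =>
      have hIF : IndepFun (∏ j ∈ T, Ys j) (Ys a) μ :=
        hindep.indepFun_finset_prod_of_notMem hYs ha
      have hfun : ∀ ω, ∏ i ∈ Finset.cons a T ha, Ys i ω
          = ((∏ j ∈ T, Ys j) * Ys a) ω := by
        intro ω
        rw [Finset.prod_cons]
        simp [Finset.prod_apply, mul_comm]
      have hintT : Integrable (∏ j ∈ T, Ys j) μ := by
        have := hint T
        convert this using 1
        ext ω; simp [Finset.prod_apply]
      calc ∫ ω, ∏ i ∈ Finset.cons a T ha, Ys i ω ∂μ
          = ∫ ω, ((∏ j ∈ T, Ys j) * Ys a) ω ∂μ := by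
            exact integral_congr_ae (Filter.Eventually.of_forall hfun)
        _ = (∫ ω, (∏ j ∈ T, Ys j) ω ∂μ) * ∫ ω, Ys a ω ∂μ :=
            hIF.integral_mul_eq_mul_integral hintT.aestronglyMeasurable (hYs a).aestronglyMeasurable
        _ = p ^ T.card * p := by
            rw [hEy a]
            congr 1
            rw [← ih]
            exact integral_congr_ae (Filter.Eventually.of_forall (fun ω => by
              simp [Finset.prod_apply]))
        _ = p ^ (Finset.cons a T ha).card := by
            rw [Finset.card_cons, pow_succ]
  -- expectation of ascending factorials of partial sums
  have hE : ∀ l : ℕ, (∫ ω, asc (∑ i ∈ Finset.range l, Ys i ω) n ∂μ)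
      = ∑ j ∈ Finset.range (n+1), Lah n j * ((j.factorial : ℝ) * ((l.choose j : ℝ) * p ^ j)) := by
    intro l
    have hall : ∀ᵐ ω ∂μ, ∀ i ∈ ((Finset.range l : Finset ℕ) : Set ℕ), Ys i ω = 0 ∨ Ys i ω = 1 :=
      (Filter.eventually_all_finite (Finset.range l).finite_toSet).2 (fun i _ => hYs01 i)
    have hcong : (fun ω => asc (∑ i ∈ Finset.range l, Ys i ω) n)
        =ᵐ[μ] (fun ω => ∑ j ∈ Finset.range (n+1), Lah n j * ((j.factorial : ℝ) *
            ∑ T ∈ (Finset.range l).powersetCard j, ∏ i ∈ T, Ys i ω)) := by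
      filter_upwards [hall] with ω hω
      rw [asc_eq_sum]
      refine Finset.sum_congr rfl (fun j _ => ?_)
      rw [fall_sum_eq (Finset.range l) (fun i => Ys i ω)
        (fun i hi => hω i (by simpa using hi)) j]
    rw [integral_congr_ae hcong, integral_finset_sum _ (fun j _ =>
      ((integrable_finset_sum _ (fun T _ => hint T)).const_mul _).const_mul _)]
    refine Finset.sum_congr rfl (fun j hj => ?_)
    rw [integral_const_mul, integral_const_mul, integral_finset_sum _ (fun T _ => hint T)]
    have hTs : ∀ T ∈ (Finset.range l).powersetCard j, (∫ ω, ∏ i ∈ T, Ys i ω ∂μ) = p ^ j := by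
      intro T hT
      rw [hprodE T, (Finset.mem_powersetCard.1 hT).2]
    rw [Finset.sum_congr rfl hTs, Finset.sum_const, Finset.card_powersetCard,
      Finset.card_range, nsmul_eq_mul]
  -- the probabilistic Lah numbers
  have hLah : ∀ k, k ∈ Finset.range (n+1) → probLah μ Ys n k = Lah n k * p ^ k := by
    intro k hk
    rw [probLah]
    have h1 : ∀ l ∈ Finset.range (k+1),
        (k.choose l : ℝ) * (-1)^(k-l) * ∫ ω, asc (∑ i ∈ Finset.range l, Ys i ω) n ∂μ
        = ∑ j ∈ Finset.range (n+1),
            (Lah n j * p ^ j * (j.factorial : ℝ)) * ((-1:ℝ)^(k-l) * (k.choose l) * (l.choose j)) := by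
      intro l _
      rw [hE l, Finset.mul_sum]
      exact Finset.sum_congr rfl (fun j _ => by ring)
    rw [Finset.sum_congr rfl h1, Finset.sum_comm]
    have h2 : ∀ j ∈ Finset.range (n+1),
        (∑ l ∈ Finset.range (k+1),
          (Lah n j * p ^ j * (j.factorial : ℝ)) * ((-1:ℝ)^(k-l) * (k.choose l) * (l.choose j)))
        = if j = k then Lah n j * p ^ j * (j.factorial : ℝ) else 0 := by
      intro j _
      rw [← Finset.mul_sum, alt_sum]
      split <;> simp
    rw [Finset.sum_congr rfl h2, Finset.sum_ite_eq' (Finset.range (n+1)) k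
      (fun j => Lah n j * p ^ j * (j.factorial : ℝ)), if_pos hk]
    have hkf : (k.factorial : ℝ) ≠ 0 := Nat.cast_ne_zero.2 k.factorial_ne_zero
    field_simp
  rw [probLahBell, LahBell]
  refine Finset.sum_congr rfl (fun k hk => ?_)
  rw [hLah k hk, mul_pow]
  ring
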